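/- Let G be an undirected 3-regular graph oriented so that every vertex is either in-in-out or out-out-in, and let M be the |E|×|V| SNP matrix where the row for edge (u,v) has 1(s) in the column(s) for u, a 0 in a column for v, holes elsewhere (one or two columns per vertex depending on type). A set of rows of M is pairwise non-conflicting if and only if the corresponding set of vertices is an independent set in G. -/
import Mathlib


open Finset

/-- Independent-set reduction: in the matrix built from a 3-regular graph `G` oriented
via `D` (rows indexed by vertices; the row of `v` has 1s exactly in the columns `col v`
assigned to `v`, and a 0 in a column assigned to each child of `v`), a set of rows is
pairwise non-conflicting iff the corresponding vertex set is independent in `G`. -/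
theorem rows_nonconflicting_iff_independent {V C : Type*} [DecidableEq V]
    (G : SimpleGraph V) (D : Finset (V × V))
    (hD : ∀ p ∈ D, G.Adj p.1 p.2)
    (hadj : ∀ u v : V, G.Adj u v → (u, v) ∈ D ∨ (v, u) ∈ D)
    (col : V → Finset C)
    (hdisj : ∀ u v : V, u ≠ v → Disjoint (col u) (col v))
    (M : V → C → Option Bool)
    (hT : ∀ v : V, ∀ c : C, (M v c = some true ↔ c ∈ col v))
    (hF : ∀ u : V, ∀ c : C, M u c = some false → ∃ w : V, (u, w) ∈ D ∧ c ∈ col w)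
    (hF' : ∀ u w : V, (u, w) ∈ D → ∃ c ∈ col w, M u c = some false)
    (S : Set V) :
    (∀ u ∈ S, ∀ v ∈ S,
        ¬ ∃ c : C, ∃ b1 b2 : Bool, M u c = some b1 ∧ M v c = some b2 ∧ b1 ≠ b2)
    ↔ (∀ u ∈ S, ∀ v ∈ S, ¬ G.Adj u v) := by
  constructor
  · intro h u hu v hv hadjuv
    rcases hadj u v hadjuv with hd | hd
    · rcases hF' u v hd with ⟨c, hc, hMu⟩
      exact h u hu v hv ⟨c, false, true, hMu, (hT v c).mpr hc, by simp⟩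
    · rcases hF' v u hd with ⟨c, hc, hMv⟩
      exact h u hu v hv ⟨c, true, false, (hT u c).mpr hc, hMv, by simp⟩
  · intro h u hu v hv ⟨c, b1, b2, hMu, hMv, hne⟩
    have huv : u ≠ v := by
      rintro rfl
      rw [hMu] at hMv
      exact hne (Option.some_injective _ hMv)
    -- one of b1, b2 is true and the other false
    have key : ∀ x y : V, x ∈ S → y ∈ S → M x c = some true → M y c = some false → False := by
      intro x y hx hy hxT hyF
      have hcx : c ∈ col x := (hT x c).mp hxT
      rcases hF y c hyF with ⟨w, hw, hcw⟩
      have hwx : w = x := by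
        by_contra hne'
        exact (hdisj w x hne').forall_ne_finset hcw hcx rfl
      rw [hwx] at hw
      exact h y hy x hx (hD _ hw)
    cases b1 <;> cases b2 <;> simp at hne
    · exact key v u hv hu hMv hMu
    · exact key u v hu hv hMu hMv
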